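/- Let R be a commutative ring and let E and F be ℤ-indexed cochain complexes of R-modules that are homotopy equivalent, i.e., there are chain maps f : E → F and g : F → E together with degree −1 maps H_E : Eⁿ → Eⁿ⁻¹ and H_F : Fⁿ → Fⁿ⁻¹ satisfying id_E − g ∘ f = d_E ∘ H_E + H_E ∘ d_E and id_F − f ∘ g = d_F ∘ H_F + H_F ∘ d_F. Then there exist a cochain complex C of R-modules and chain maps i_E : E → C, p_E : C → E, i_F : F → C, p_F : C → F such that p_E ∘ i_E = id_E, p_F ∘ i_F = id_F, p_F ∘ i_E = f, and such that i_E ∘ p_E is chain homotopic to id_C and i_F ∘ p_F is chain homotopic to id_C. -/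
import Mathlib

set_option maxHeartbeats 1000000


universe u v

/-- A ℤ-indexed cochain complex of `R`-modules: a family of `R`-modules `X n`
with differentials `d n : X n →ₗ[R] X (n+1)` squaring to zero. -/
structure CochainCx (R : Type u) [CommRing R] where
  X : ℤ → Type v
  [acg : ∀ n : ℤ, AddCommGroup (X n)]
  [mod : ∀ n : ℤ, Module R (X n)]
  d : ∀ n : ℤ, X n →ₗ[R] X (n + 1)
  d_sq : ∀ (n : ℤ) (x : X n), d (n + 1) (d n x) = 0

attribute [instance] CochainCx.acg CochainCx.mod

variable {R : Type u} [CommRing R]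

/-- A chain map between cochain complexes of `R`-modules. -/
structure ChainMap (E F : CochainCx.{u, v} R) where
  f : ∀ n : ℤ, E.X n →ₗ[R] F.X n
  comm : ∀ (n : ℤ) (x : E.X n), f (n + 1) (E.d n x) = F.d n (f n x)

/-- If `E` and `F` are homotopy equivalent cochain complexes of `R`-modules (via chain
maps `f`, `g` and homotopies `H_E`, `H_F` with `id_E − g∘f = d_E∘H_E + H_E∘d_E` and
`id_F − f∘g = d_F∘H_F + H_F∘d_F`), then there exist a cochain complex `C` and chain
maps `i_E : E → C`, `p_E : C → E`, `i_F : F → C`, `p_F : C → F` with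
`p_E ∘ i_E = id_E`, `p_F ∘ i_F = id_F`, `p_F ∘ i_E = f`, and such that
`i_E ∘ p_E` and `i_F ∘ p_F` are chain homotopic to `id_C`. -/
theorem homotopy_equivalence_factors_through_common_complex
    (E F : CochainCx.{u, v} R) (f : ChainMap E F) (g : ChainMap F E)
    (HE : ∀ n : ℤ, E.X (n + 1) →ₗ[R] E.X n)
    (HF : ∀ n : ℤ, F.X (n + 1) →ₗ[R] F.X n)
    (hE : ∀ (n : ℤ) (x : E.X (n + 1)),
      x - g.f (n + 1) (f.f (n + 1) x) = E.d n (HE n x) + HE (n + 1) (E.d (n + 1) x))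
    (hF : ∀ (n : ℤ) (y : F.X (n + 1)),
      y - f.f (n + 1) (g.f (n + 1) y) = F.d n (HF n y) + HF (n + 1) (F.d (n + 1) y)) :
    ∃ (C : CochainCx.{u, v} R) (iE : ChainMap E C) (pE : ChainMap C E)
      (iF : ChainMap F C) (pF : ChainMap C F),
      (∀ (n : ℤ) (e : E.X n), pE.f n (iE.f n e) = e) ∧
      (∀ (n : ℤ) (y : F.X n), pF.f n (iF.f n y) = y) ∧
      (∀ (n : ℤ) (e : E.X n), pF.f n (iE.f n e) = f.f n e) ∧
      (∃ H₁ : ∀ n : ℤ, C.X (n + 1) →ₗ[R] C.X n,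
        ∀ (n : ℤ) (x : C.X (n + 1)),
          x - iE.f (n + 1) (pE.f (n + 1) x) = C.d n (H₁ n x) + H₁ (n + 1) (C.d (n + 1) x)) ∧
      (∃ H₂ : ∀ n : ℤ, C.X (n + 1) →ₗ[R] C.X n,
        ∀ (n : ℤ) (x : C.X (n + 1)),
          x - iF.f (n + 1) (pF.f (n + 1) x) = C.d n (H₂ n x) + H₂ (n + 1) (C.d (n + 1) x)) := by

  -- mapping cylinder of f
  refine ⟨{ X := fun n => E.X n × E.X (n + 1) × F.X n
            d := fun n =>
              { toFun := fun p => (E.d n p.1 - p.2.1, -(E.d (n+1) p.2.1),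
                  f.f (n+1) p.2.1 + F.d n p.2.2)
                map_add' := by intro p q; simp [map_add]; constructor <;> [skip; constructor] <;> abel
                map_smul' := by intro r p; simp [map_smul, smul_sub, smul_add, smul_neg] }
            d_sq := by
              intro n x
              simp [E.d_sq, F.d_sq, map_sub, map_neg, f.comm, Prod.ext_iff] },
          { f := fun n =>
              { toFun := fun e => (e, 0, 0)
                map_add' := by intro a b; simp
                map_smul' := by intro r a; simp }
            comm := by intro n x; simp },
          { f := fun n =>
              { toFun := fun p => p.1 - HE n p.2.1 + g.f n p.2.2
                map_add' := by intro p q; simp [map_add]; abel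
                map_smul' := by intro r p; simp only [Prod.smul_fst, Prod.smul_snd, map_smul, smul_sub, smul_add, RingHom.id_apply] }
            comm := by
              intro n x
              have h := hE n x.2.1
              simp only [LinearMap.coe_mk, AddHom.coe_mk, map_sub, map_add, map_neg, g.comm]
              have : HE (n+1) (E.d (n+1) x.2.1) = x.2.1 - g.f (n+1) (f.f (n+1) x.2.1)
                  - E.d n (HE n x.2.1) := by rw [h]; abel
              rw [this]
              abel },
          { f := fun n =>
              { toFun := fun c => (0, 0, c)
                map_add' := by intro a b; simp
                map_smul' := by intro r a; simp }
            comm := by intro n x; simp },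
          { f := fun n =>
              { toFun := fun p => f.f n p.1 + p.2.2
                map_add' := by intro p q; simp; abel
                map_smul' := by intro r p; simp }
            comm := by intro n x; simp [map_sub, f.comm]; abel },
          ?_, ?_, ?_, ?_, ?_⟩
  · intro n e; simp
  · intro n y; simp
  · intro n e; simp
  · -- H₁ : homotopy id ≃ iE ∘ pE
    refine ⟨fun n =>
      { toFun := fun p => (-(HE n p.1),
          -p.1 + g.f (n+1) (f.f (n+1) p.1) + g.f (n+1) p.2.2,
          HF n (f.f (n+1) p.1) + HF n p.2.2)
        map_add' := by intro p q; simp [map_add]; constructor <;> [skip; constructor] <;> abel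
        map_smul' := by intro r p; simp [map_smul, smul_sub, smul_add, smul_neg] }, ?_⟩
    intro n x
    obtain ⟨a, b, c⟩ := x
    simp only [LinearMap.coe_mk, AddHom.coe_mk, Prod.mk.injEq, map_sub, map_add, map_neg,
      Prod.mk_sub_mk, Prod.mk_add_mk]
    have h1' : HE (n+1) (E.d (n+1) a) =
        a - g.f (n+1) (f.f (n+1) a) - E.d n (HE n a) := by rw [hE n a]; abel
    have e1 : HF (n+1) (F.d (n+1) (f.f (n+1) a)) =
        f.f (n+1) a - f.f (n+1) (g.f (n+1) (f.f (n+1) a))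
          - F.d n (HF n (f.f (n+1) a)) := by rw [hF n (f.f (n+1) a)]; abel
    have e2 : HF (n+1) (F.d (n+1) c) = c - f.f (n+1) (g.f (n+1) c) - F.d n (HF n c) := by
      rw [hF n c]; abel
    have hfc : f.f (n+1+1) (E.d (n+1) a) = F.d (n+1) (f.f (n+1) a) := f.comm (n+1) a
    have hgc : g.f (n+1+1) (F.d (n+1) c) = E.d (n+1) (g.f (n+1) c) := g.comm (n+1) c
    have hgfc : g.f (n+1+1) (F.d (n+1) (f.f (n+1) a))
        = E.d (n+1) (g.f (n+1) (f.f (n+1) a)) := g.comm (n+1) (f.f (n+1) a)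
    refine ⟨?_, ?_, ?_⟩
    · rw [h1']; abel
    · rw [hfc, hgfc, hgc]; abel
    · rw [hfc, e1, e2]; abel
  · -- H₂ : homotopy id ≃ iF ∘ pF
    refine ⟨fun n =>
      { toFun := fun p => (0, -p.1, 0)
        map_add' := by intro p q; simp; abel
        map_smul' := by intro r p; simp }, ?_⟩
    intro n x
    obtain ⟨a, b, c⟩ := x
    simp only [LinearMap.coe_mk, AddHom.coe_mk, Prod.mk.injEq, map_sub, map_add, map_neg,
      map_zero, Prod.mk_sub_mk, Prod.mk_add_mk]
    refine ⟨by abel, by abel, by abel⟩
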